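/- Let H_A, H_B, H_E be finite-dimensional complex Hilbert spaces with dim H_A = dim H_B = d, let |ψ⟩ ∈ H_A ⊗ H_B ⊗ H_E be a unit vector, and set τ_{AB} := Tr_E |ψ⟩⟨ψ| and τ_{AE} := Tr_B |ψ⟩⟨ψ|. Assume τ_{AB} is maximally correlated: there exist orthonormal bases {v_j^A}_{j=1}^d of H_A and {v_j^B}_{j=1}^d of H_B and complex coefficients a_{j,j'} with τ_{AB} = Σ_{j,j'} a_{j,j'} |v_j^A ⊗ v_j^B⟩⟨v_{j'}^A ⊗ v_{j'}^B|. Then there exist unit vectors u_1, …, u_d ∈ H_E such that τ_{AE} = Σ_{j=1}^d [(I_A ⊗ ⟨v_j^B|) τ_{AB} (I_A ⊗ |v_j^B⟩)] ⊗ |u_j⟩⟨u_j|; in other words, the measure-and-prepare channel Γ(ρ) := Σ_j ⟨v_j^B|ρ|v_j^B⟩ |u_j⟩⟨u_j| from operators on H_B to operators on H_E satisfies (id_A ⊗ Γ)(τ_{AB}) = τ_{AE}. -/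

import Mathlib

open scoped Kronecker
open Matrix

noncomputable section

/-- Workhorse: factor a product of sums across a shared index. -/
lemma mcd_factor {ι κ μ : Type*} [Fintype ι] [Fintype κ] [Fintype μ]
    (A : ι → μ → ℂ) (B : κ → μ → ℂ) :
    ∑ b : μ, (∑ j : ι, A j b) * (∑ k : κ, B k b)
      = ∑ j : ι, ∑ k : κ, ∑ b : μ, A j b * B k b := by
  calc ∑ b : μ, (∑ j : ι, A j b) * (∑ k : κ, B k b)
      = ∑ b : μ, ∑ j : ι, ∑ k : κ, A j b * B k b := by
        refine Finset.sum_congr rfl fun b _ => ?_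
        rw [Finset.sum_mul_sum]
    _ = ∑ j : ι, ∑ b : μ, ∑ k : κ, A j b * B k b := Finset.sum_comm
    _ = ∑ j : ι, ∑ k : κ, ∑ b : μ, A j b * B k b :=
        Finset.sum_congr rfl fun j _ => Finset.sum_comm

lemma mcd_sum_prod_mul {n m : ℕ} (f : Fin n → ℂ) (g : Fin m → ℂ) :
    ∑ p : Fin n × Fin m, f p.1 * g p.2 = (∑ i, f i) * (∑ j, g j) := by
  rw [Fintype.sum_prod_type, ← Finset.sum_mul_sum]

lemma mcd_conj_rows {n : ℕ} (v : Fin n → Fin n → ℂ)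
    (hv : ∀ j k, ∑ i, (starRingEnd ℂ) (v j i) * v k i = if j = k then 1 else 0) :
    ∀ j k, ∑ i, v j i * (starRingEnd ℂ) (v k i) = if j = k then 1 else 0 := by
  intro j k
  have := congrArg (starRingEnd ℂ) (hv j k)
  simp only [map_sum, _root_.map_mul, Complex.conj_conj, _root_.map_one, map_zero,
    apply_ite] at this
  split_ifs at this ⊢ <;> exact this

lemma mcd_rows_of_cols {n : ℕ} (v : Fin n → Fin n → ℂ)
    (hv : ∀ j k, ∑ i, (starRingEnd ℂ) (v j i) * v k i = if j = k then 1 else 0) :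
    ∀ i i', ∑ j, (starRingEnd ℂ) (v j i) * v j i' = if i = i' then 1 else 0 := by
  set M : Matrix (Fin n) (Fin n) ℂ := Matrix.of v with hM
  have h1 : M * Mᴴ = 1 := by
    ext j k
    have := mcd_conj_rows v hv j k
    simp only [Matrix.mul_apply, Matrix.conjTranspose_apply, Matrix.one_apply, hM,
      Matrix.of_apply]
    exact this
  have h2 : Mᴴ * M = 1 := mul_eq_one_comm.mp h1
  intro i i'
  have := congrFun (congrFun h2 i) i'
  simpa [Matrix.mul_apply, Matrix.conjTranspose_apply, Matrix.one_apply, hM] using this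

lemma mcd_contract {n : ℕ} (v : Fin n → Fin n → ℂ)
    (hv : ∀ i i', ∑ j, (starRingEnd ℂ) (v j i) * v j i' = if i = i' then 1 else 0)
    (f : Fin n → ℂ) (i : Fin n) :
    ∑ j, v j i * ∑ i', (starRingEnd ℂ) (v j i') * f i' = f i := by
  have h : ∑ j, v j i * ∑ i', (starRingEnd ℂ) (v j i') * f i'
      = ∑ i', ∑ j, (v j i * ((starRingEnd ℂ) (v j i') * f i')) := by
    simp only [Finset.mul_sum]
    exact Finset.sum_comm
  rw [h]
  have h2 : ∀ i', ∑ j, (v j i * ((starRingEnd ℂ) (v j i') * f i'))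
      = (∑ j, (starRingEnd ℂ) (v j i') * v j i) * f i' := by
    intro i'
    rw [Finset.sum_mul]
    exact Finset.sum_congr rfl fun _ _ => by ring
  simp only [h2, hv]
  simp [Finset.sum_ite_eq, ite_mul]

/-- If `τ_AB` (the `AB` marginal of a tripartite pure state) is maximally
correlated, then `τ_AE` is obtained from `τ_AB` by a measure-and-prepare channel on `B`. -/
theorem maximally_correlated_degraded
    {d dE : ℕ}
    (ψ : Fin d × Fin d × Fin dE → ℂ)
    (hψ : ∑ i, Complex.normSq (ψ i) = 1)
    (vA vB : Fin d → Fin d → ℂ)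
    (hvA : ∀ j k, ∑ i, (starRingEnd ℂ) (vA j i) * vA k i = if j = k then 1 else 0)
    (hvB : ∀ j k, ∑ i, (starRingEnd ℂ) (vB j i) * vB k i = if j = k then 1 else 0)
    (a : Fin d → Fin d → ℂ)
    (hmc : (Matrix.of fun (ab ab' : Fin d × Fin d) =>
        ∑ e, Matrix.vecMulVec ψ (star ψ) (ab.1, ab.2, e) (ab'.1, ab'.2, e))
      = ∑ j : Fin d, ∑ j' : Fin d, a j j' •
          Matrix.vecMulVec (fun i : Fin d × Fin d => vA j i.1 * vB j i.2)
            (star (fun i : Fin d × Fin d => vA j' i.1 * vB j' i.2))) :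
    ∃ u : Fin d → Fin dE → ℂ,
      (∀ j, ∑ k, Complex.normSq (u j k) = 1) ∧
      (Matrix.of fun (ae ae' : Fin d × Fin dE) =>
          ∑ b, Matrix.vecMulVec ψ (star ψ) (ae.1, b, ae.2) (ae'.1, b, ae'.2))
        = ∑ j : Fin d,
            (Matrix.of fun a₁ a₂ : Fin d =>
              ∑ b, ∑ b', (starRingEnd ℂ) (vB j b) *
                (Matrix.of fun (ab ab' : Fin d × Fin d) =>
                  ∑ e, Matrix.vecMulVec ψ (star ψ) (ab.1, ab.2, e) (ab'.1, ab'.2, e))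
                  (a₁, b) (a₂, b') * vB j b')
            ⊗ₖ Matrix.vecMulVec (u j) (star (u j)) := by
  classical
  have hcA := mcd_rows_of_cols vA hvA
  have hcB := mcd_rows_of_cols vB hvB
  have hvA' := mcd_conj_rows vA hvA
  have hvB' := mcd_conj_rows vB hvB
  -- coefficients of ψ in the product basis
  obtain ⟨w, hw⟩ : ∃ w : Fin d → Fin d → Fin dE → ℂ, w = fun j k e =>
      ∑ b', (starRingEnd ℂ) (vB k b') * ∑ a', (starRingEnd ℂ) (vA j a') * ψ (a', b', e) :=
    ⟨_, rfl⟩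
  -- there is a point of `Fin dE`
  have hE : Nonempty (Fin dE) := by
    by_contra h
    rw [not_nonempty_iff] at h
    have : IsEmpty (Fin d × Fin d × Fin dE) := by infer_instance
    rw [Fintype.sum_empty] at hψ
    exact one_ne_zero hψ.symm
  obtain ⟨e0⟩ := hE
  -- reconstruction of ψ from its coefficients
  have hrec : ∀ a b e : _, ψ (a, b, e) = ∑ j, vA j a * ∑ k, vB k b * w j k e := by
    intro a b e
    have h2 := mcd_contract vA hcA (fun a' => ψ (a', b, e)) a
    rw [← h2]
    refine Finset.sum_congr rfl fun j _ => ?_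
    congr 1
    have h1 := mcd_contract vB hcB
      (fun b' => ∑ a', (starRingEnd ℂ) (vA j a') * ψ (a', b', e)) b
    simp only [hw]
    exact h1.symm
  -- entrywise form of the maximal-correlation hypothesis
  have hmc' := Matrix.ext_iff.mpr hmc
  -- off-diagonal coefficients vanish
  have hmcE : ∀ p q : Fin d × Fin d,
      (∑ e, ψ (p.1, p.2, e) * (starRingEnd ℂ) (ψ (q.1, q.2, e)))
        = ∑ r, ∑ s, a r s * ((vA r p.1 * vB r p.2) *
            (starRingEnd ℂ) (vA s q.1 * vB s q.2)) := by
    intro p q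
    have h := hmc' p q
    simpa [Matrix.sum_apply, Matrix.smul_apply, Matrix.vecMulVec_apply, Pi.star_apply,
      Complex.star_def, smul_eq_mul, mul_assoc] using h
  have hoff : ∀ j k, j ≠ k → ∀ e, w j k e = 0 := by
    intro j k hjk
    have ew : ∀ e, ∑ p : Fin d × Fin d,
        (starRingEnd ℂ) (vA j p.1 * vB k p.2) * ψ (p.1, p.2, e) = w j k e := by
      intro e
      rw [hw]
      simp only
      rw [Fintype.sum_prod_type, Finset.sum_comm]
      refine Finset.sum_congr rfl fun b _ => ?_
      rw [Finset.mul_sum]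
      refine Finset.sum_congr rfl fun α _ => ?_
      simp only [_root_.map_mul]
      ring
    have hzero : ∀ r : Fin d, (if j = r then (1:ℂ) else 0) * (if k = r then 1 else 0) = 0 := by
      intro r
      by_cases h1 : j = r
      · by_cases h2 : k = r
        · exact absurd (h1.trans h2.symm) hjk
        · simp [h1, h2]
      · simp [h1]
    have hS : ∑ e, w j k e * (starRingEnd ℂ) (w j k e) = 0 := by
      calc ∑ e, w j k e * (starRingEnd ℂ) (w j k e)
          = ∑ e, (∑ p : Fin d × Fin d,
                (starRingEnd ℂ) (vA j p.1 * vB k p.2) * ψ (p.1, p.2, e)) *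
              (∑ q : Fin d × Fin d,
                (vA j q.1 * vB k q.2) * (starRingEnd ℂ) (ψ (q.1, q.2, e))) := by
            refine Finset.sum_congr rfl fun e _ => ?_
            rw [← ew e, map_sum]
            congr 1
            refine Finset.sum_congr rfl fun q _ => ?_
            simp only [_root_.map_mul, Complex.conj_conj]
        _ = ∑ p : Fin d × Fin d, ∑ q : Fin d × Fin d, ∑ e,
              ((starRingEnd ℂ) (vA j p.1 * vB k p.2) * ψ (p.1, p.2, e)) *
              ((vA j q.1 * vB k q.2) * (starRingEnd ℂ) (ψ (q.1, q.2, e))) :=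
            mcd_factor _ _
        _ = ∑ p : Fin d × Fin d, ∑ q : Fin d × Fin d,
              ((starRingEnd ℂ) (vA j p.1 * vB k p.2) * (vA j q.1 * vB k q.2)) *
              (∑ e, ψ (p.1, p.2, e) * (starRingEnd ℂ) (ψ (q.1, q.2, e))) := by
            refine Finset.sum_congr rfl fun p _ => Finset.sum_congr rfl fun q _ => ?_
            rw [Finset.mul_sum]
            exact Finset.sum_congr rfl fun e _ => by ring
        _ = ∑ p : Fin d × Fin d, ∑ q : Fin d × Fin d, ∑ t : Fin d × Fin d,
              (a t.1 t.2 * (((starRingEnd ℂ) (vA j p.1) * vA t.1 p.1) *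
                ((starRingEnd ℂ) (vB k p.2) * vB t.1 p.2))) *
              (((starRingEnd ℂ) (vA t.2 q.1) * vA j q.1) *
                ((starRingEnd ℂ) (vB t.2 q.2) * vB k q.2)) := by
            refine Finset.sum_congr rfl fun p _ => Finset.sum_congr rfl fun q _ => ?_
            rw [hmcE p q, Fintype.sum_prod_type]
            simp only [Finset.mul_sum]
            refine Finset.sum_congr rfl fun r _ => Finset.sum_congr rfl fun t _ => ?_
            simp only [_root_.map_mul]
            ring
        _ = ∑ t : Fin d × Fin d,
              (∑ p : Fin d × Fin d, a t.1 t.2 * (((starRingEnd ℂ) (vA j p.1) * vA t.1 p.1) *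
                ((starRingEnd ℂ) (vB k p.2) * vB t.1 p.2))) *
              (∑ q : Fin d × Fin d, ((starRingEnd ℂ) (vA t.2 q.1) * vA j q.1) *
                ((starRingEnd ℂ) (vB t.2 q.2) * vB k q.2)) := (mcd_factor _ _).symm
        _ = 0 := by
            refine Finset.sum_eq_zero fun t _ => ?_
            have hp : ∑ p : Fin d × Fin d, (((starRingEnd ℂ) (vA j p.1) * vA t.1 p.1) *
                ((starRingEnd ℂ) (vB k p.2) * vB t.1 p.2)) = 0 := by
              rw [mcd_sum_prod_mul (fun α => (starRingEnd ℂ) (vA j α) * vA t.1 α)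
                (fun β => (starRingEnd ℂ) (vB k β) * vB t.1 β), hvA, hvB]
              exact hzero t.1
            rw [← Finset.mul_sum, hp, mul_zero, zero_mul]
    intro e
    have hcast : ∑ e, w j k e * (starRingEnd ℂ) (w j k e)
        = ((∑ e, Complex.normSq (w j k e) : ℝ) : ℂ) := by
      push_cast
      simp [Complex.mul_conj]
    rw [hcast] at hS
    have hreal : ∑ e, Complex.normSq (w j k e) = 0 := by exact_mod_cast hS
    have := (Finset.sum_eq_zero_iff_of_nonneg
      (fun e _ => Complex.normSq_nonneg (w j k e))).mp hreal e (Finset.mem_univ e)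
    exact Complex.normSq_eq_zero.mp this
  -- diagonal reconstruction
  have hrec2 : ∀ a b e : _, ψ (a, b, e) = ∑ j, vA j a * vB j b * w j j e := by
    intro a b e
    rw [hrec a b e]
    refine Finset.sum_congr rfl fun j _ => ?_
    rw [Finset.sum_eq_single j]
    · ring
    · intro k _ hk
      rw [hoff j k (Ne.symm hk)]; ring
    · intro h; exact absurd (Finset.mem_univ j) h
  -- projection onto the j-th B basis vector
  have hproj : ∀ j a e, ∑ b, (starRingEnd ℂ) (vB j b) * ψ (a, b, e)
      = vA j a * w j j e := by
    intro j a e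
    simp only [hrec2]
    have h1 : ∀ kk, ∑ b, (starRingEnd ℂ) (vB j b) * (vA kk a * vB kk b * w kk kk e)
        = (vA kk a * w kk kk e) * ∑ b, (starRingEnd ℂ) (vB j b) * vB kk b := by
      intro kk
      rw [Finset.mul_sum]
      exact Finset.sum_congr rfl fun b _ => by ring
    calc ∑ b, (starRingEnd ℂ) (vB j b) * ∑ kk, vA kk a * vB kk b * w kk kk e
        = ∑ kk, ∑ b, (starRingEnd ℂ) (vB j b) * (vA kk a * vB kk b * w kk kk e) := by
          simp only [Finset.mul_sum]
          exact Finset.sum_comm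
      _ = ∑ kk, (vA kk a * w kk kk e) * ∑ b, (starRingEnd ℂ) (vB j b) * vB kk b :=
          Finset.sum_congr rfl fun kk _ => h1 kk
      _ = vA j a * w j j e := by
          simp only [hvB, mul_ite, mul_one, mul_zero]
          simp [Finset.sum_ite_eq]
  obtain ⟨N, hN⟩ : ∃ N : Fin d → ℝ, N = fun j => ∑ e, Complex.normSq (w j j e) := ⟨_, rfl⟩
  have hNnn : ∀ j, 0 ≤ N j := fun j => by
    rw [hN]
    exact Finset.sum_nonneg fun e _ => Complex.normSq_nonneg _
  have hNzero : ∀ j, N j = 0 → ∀ e, w j j e = 0 := by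
    intro j hj e
    rw [hN] at hj
    simp only at hj
    have := (Finset.sum_eq_zero_iff_of_nonneg
      (fun e _ => Complex.normSq_nonneg (w j j e))).mp hj e (Finset.mem_univ e)
    exact Complex.normSq_eq_zero.mp this
  have hNc : ∀ j, ∑ e, w j j e * (starRingEnd ℂ) (w j j e) = ((N j : ℝ) : ℂ) := by
    intro j
    rw [hN]
    simp only [Complex.mul_conj]
    push_cast
    rfl
  -- the output states
  obtain ⟨u, hu⟩ : ∃ u : Fin d → Fin dE → ℂ, u = fun j e =>
      if N j = 0 then (if e = e0 then 1 else 0)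
      else ((Real.sqrt (N j))⁻¹ : ℝ) * w j j e := ⟨_, rfl⟩
  have hunorm : ∀ j, ∑ k, Complex.normSq (u j k) = 1 := by
    intro j
    by_cases h : N j = 0
    · simp only [hu, h, if_true, reduceIte]
      simp [apply_ite Complex.normSq, Finset.sum_ite_eq']
    · have hpos : 0 < N j := lt_of_le_of_ne (hNnn j) (Ne.symm h)
      have hsq : Real.sqrt (N j) * Real.sqrt (N j) = N j := Real.mul_self_sqrt (hNnn j)
      have hsne : Real.sqrt (N j) ≠ 0 := ne_of_gt (Real.sqrt_pos.mpr hpos)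
      calc ∑ k, Complex.normSq (u j k)
          = ∑ k, ((Real.sqrt (N j))⁻¹ * (Real.sqrt (N j))⁻¹) * Complex.normSq (w j j k) := by
            refine Finset.sum_congr rfl fun k _ => ?_
            simp only [hu, h, if_false, reduceIte, Complex.normSq_mul, Complex.normSq_ofReal]
            try ring
        _ = ((Real.sqrt (N j))⁻¹ * (Real.sqrt (N j))⁻¹) * N j := by
            rw [← Finset.mul_sum, hN]
        _ = 1 := by
            rw [← hsq]
            field_simp
            rw [Real.sqrt_sq (Real.sqrt_nonneg _)]
  have hkey : ∀ j e e', w j j e * (starRingEnd ℂ) (w j j e')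
      = ((N j : ℝ) : ℂ) * (u j e * (starRingEnd ℂ) (u j e')) := by
    intro j e e'
    by_cases h : N j = 0
    · simp [hNzero j h, h]
    · have hpos : 0 < N j := lt_of_le_of_ne (hNnn j) (Ne.symm h)
      have hsq : Real.sqrt (N j) * Real.sqrt (N j) = N j := Real.mul_self_sqrt (hNnn j)
      have hsne : Real.sqrt (N j) ≠ 0 := ne_of_gt (Real.sqrt_pos.mpr hpos)
      have hr : ((N j : ℝ) : ℂ) * (((Real.sqrt (N j))⁻¹ : ℝ) : ℂ) *
          (((Real.sqrt (N j))⁻¹ : ℝ) : ℂ) = 1 := by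
        rw [← Complex.ofReal_mul, ← Complex.ofReal_mul, ← Complex.ofReal_one]
        congr 1
        rw [← hsq]
        field_simp
        rw [Real.sqrt_sq (Real.sqrt_nonneg _)]
      simp only [hu, h, if_false, reduceIte, _root_.map_mul, Complex.conj_ofReal]
      calc w j j e * (starRingEnd ℂ) (w j j e')
          = (((N j : ℝ) : ℂ) * (((Real.sqrt (N j))⁻¹ : ℝ) : ℂ) *
              (((Real.sqrt (N j))⁻¹ : ℝ) : ℂ)) * (w j j e * (starRingEnd ℂ) (w j j e')) := by
            rw [hr, one_mul]
        _ = ((N j : ℝ) : ℂ) * ((((Real.sqrt (N j))⁻¹ : ℝ) : ℂ) * w j j e *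
              ((((Real.sqrt (N j))⁻¹ : ℝ) : ℂ) * (starRingEnd ℂ) (w j j e'))) := by
            ring
  -- the two computations
  have hL : ∀ a1 a2 e1 e2, ∑ b, ψ (a1, b, e1) * (starRingEnd ℂ) (ψ (a2, b, e2))
      = ∑ j, (vA j a1 * (starRingEnd ℂ) (vA j a2)) *
          (w j j e1 * (starRingEnd ℂ) (w j j e2)) := by
    intro a1 a2 e1 e2
    calc ∑ b, ψ (a1, b, e1) * (starRingEnd ℂ) (ψ (a2, b, e2))
        = ∑ b, (∑ j, (vA j a1 * w j j e1) * vB j b) *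
            (∑ k, ((starRingEnd ℂ) (vA k a2) * (starRingEnd ℂ) (w k k e2)) *
              (starRingEnd ℂ) (vB k b)) := by
          refine Finset.sum_congr rfl fun b _ => ?_
          rw [hrec2 a1 b e1, hrec2 a2 b e2]
          congr 1
          · exact Finset.sum_congr rfl fun j _ => by ring
          · rw [map_sum]
            refine Finset.sum_congr rfl fun k _ => ?_
            simp only [_root_.map_mul]
            ring
      _ = ∑ j, ∑ k, ∑ b, ((vA j a1 * w j j e1) * vB j b) *
            (((starRingEnd ℂ) (vA k a2) * (starRingEnd ℂ) (w k k e2)) *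
              (starRingEnd ℂ) (vB k b)) := mcd_factor _ _
      _ = ∑ j, ∑ k, ((vA j a1 * w j j e1) *
            ((starRingEnd ℂ) (vA k a2) * (starRingEnd ℂ) (w k k e2))) *
            ∑ b, vB j b * (starRingEnd ℂ) (vB k b) := by
          refine Finset.sum_congr rfl fun j _ => Finset.sum_congr rfl fun k _ => ?_
          rw [Finset.mul_sum]
          exact Finset.sum_congr rfl fun b _ => by ring
      _ = ∑ j, (vA j a1 * (starRingEnd ℂ) (vA j a2)) *
            (w j j e1 * (starRingEnd ℂ) (w j j e2)) := by
          simp only [hvB', mul_ite, mul_one, mul_zero]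
          simp only [Finset.sum_ite_eq, Finset.mem_univ, if_true]
          exact Finset.sum_congr rfl fun j _ => by ring
  have hMeas : ∀ j a1 a2, (∑ b, ∑ b', (starRingEnd ℂ) (vB j b) *
        (∑ e, ψ (a1, b, e) * (starRingEnd ℂ) (ψ (a2, b', e))) * vB j b')
      = (vA j a1 * (starRingEnd ℂ) (vA j a2)) * ((N j : ℝ) : ℂ) := by
    intro j a1 a2
    calc ∑ b, ∑ b', (starRingEnd ℂ) (vB j b) *
          (∑ e, ψ (a1, b, e) * (starRingEnd ℂ) (ψ (a2, b', e))) * vB j b'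
        = ∑ b, ∑ b', ∑ e, ((starRingEnd ℂ) (vB j b) * ψ (a1, b, e)) *
            ((starRingEnd ℂ) (ψ (a2, b', e)) * vB j b') := by
          refine Finset.sum_congr rfl fun b _ => Finset.sum_congr rfl fun b' _ => ?_
          rw [Finset.mul_sum, Finset.sum_mul]
          exact Finset.sum_congr rfl fun e _ => by ring
      _ = ∑ e, (∑ b, (starRingEnd ℂ) (vB j b) * ψ (a1, b, e)) *
            (∑ b', (starRingEnd ℂ) (ψ (a2, b', e)) * vB j b') := (mcd_factor _ _).symm
      _ = ∑ e, (vA j a1 * w j j e) *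
            ((starRingEnd ℂ) (vA j a2) * (starRingEnd ℂ) (w j j e)) := by
          refine Finset.sum_congr rfl fun e _ => ?_
          rw [hproj j a1 e]
          congr 1
          have : ∑ b', (starRingEnd ℂ) (ψ (a2, b', e)) * vB j b'
              = (starRingEnd ℂ) (∑ b', (starRingEnd ℂ) (vB j b') * ψ (a2, b', e)) := by
            rw [map_sum]
            refine Finset.sum_congr rfl fun b' _ => ?_
            simp only [_root_.map_mul, Complex.conj_conj]
            ring
          rw [this, hproj j a2 e, _root_.map_mul]
      _ = (vA j a1 * (starRingEnd ℂ) (vA j a2)) * ((N j : ℝ) : ℂ) := by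
          rw [← hNc j, Finset.mul_sum]
          exact Finset.sum_congr rfl fun e _ => by ring
  refine ⟨u, hunorm, ?_⟩
  ext ⟨a1, e1⟩ ⟨a2, e2⟩
  simp only [Matrix.of_apply, Matrix.sum_apply, Matrix.kroneckerMap_apply,
    Matrix.vecMulVec_apply, Pi.star_apply, Complex.star_def]
  rw [hL a1 a2 e1 e2]
  refine Finset.sum_congr rfl fun j _ => ?_
  rw [hMeas j a1 a2, hkey j e1 e2]
  ring

end
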